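/- Suppose P_{ST} and P_{S'T'R'} are finitely-supported distributions such that P_T(t*) = α > 0, P_{S|T=t*} = P_S, and ‖P_{ST} − P_{S'T'}‖₁ ≤ α. Then ‖P_{S'T'R'} − P_{ST}·P_{R'|T'=t*}‖₁ ≤ (2/α)·(‖P_{S'T'R'} − P_{T'R'}·P_{S|T}‖₁ + ‖P_{S'T'R'} − P_{S'R'}·P_{T|S}‖₁) + (5/α)·‖P_{S'T'} − P_{ST}‖₁. -/

import Mathlib

private lemma aux_pt (α β qsr ps n : ℝ) (hα : 0 ≤ α) (hps : 0 ≤ ps) (hn : 0 ≤ n) :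
    |qsr - ps * n| * α ≤ |α * qsr - ps * (β * n)| + ps * n * |β - α| := by
  have e1 : |qsr - ps * n| * α = |(qsr - ps * n) * α| := by
    rw [abs_mul, abs_of_nonneg hα]
  have e2 : (qsr - ps * n) * α = (α * qsr - ps * (β * n)) + ps * n * (β - α) := by ring
  rw [e1, e2]
  refine (abs_add_le _ _).trans ?_
  have e3 : |ps * n * (β - α)| = ps * n * |β - α| := by
    rw [abs_mul, abs_of_nonneg (mul_nonneg hps hn)]
  rw [e3]



/-- Under the same hypotheses as the companion lemma
(`P_T(t*) = α > 0`, `P_{S|T=t*} = P_S`, `‖P_{ST} − P_{S'T'}‖₁ ≤ α`),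
`‖P_{S'T'R'} − P_{ST}·P_{R'|T'=t*}‖₁
  ≤ (2/α)(‖P_{S'T'R'} − P_{T'R'}·P_{S|T}‖₁ + ‖P_{S'T'R'} − P_{S'R'}·P_{T|S}‖₁)
    + (5/α)‖P_{S'T'} − P_{ST}‖₁`. -/
theorem anchored_conditioning_ii {S T R : Type*} [Fintype S] [Fintype T] [Fintype R]
    (P : S × T → ℝ) (Q : S × T × R → ℝ)
    (hP0 : ∀ p, 0 ≤ P p) (hP1 : ∑ p, P p = 1)
    (hQ0 : ∀ q, 0 ≤ Q q) (hQ1 : ∑ q, Q q = 1)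
    (tstar : T) (α : ℝ) (hα : 0 < α)
    (hPT : ∑ s, P (s, tstar) = α)
    (hanchor : ∀ s, P (s, tstar) / α = ∑ t, P (s, t))
    (hclose : ∑ s, ∑ t, |(∑ r, Q (s, t, r)) - P (s, t)| ≤ α) :
    ∑ s, ∑ t, ∑ r,
        |Q (s, t, r) - P (s, t) *
            ((∑ s', Q (s', tstar, r)) / (∑ s', ∑ r', Q (s', tstar, r')))|
      ≤ (2 / α) *
          ((∑ s, ∑ t, ∑ r,
              |Q (s, t, r) - (∑ s', Q (s', t, r)) * (P (s, t) / ∑ s', P (s', t))|)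
           + ∑ s, ∑ t, ∑ r,
              |Q (s, t, r) - (∑ t', Q (s, t', r)) * (P (s, t) / ∑ t', P (s, t'))|)
        + (5 / α) * ∑ s, ∑ t, |(∑ r, Q (s, t, r)) - P (s, t)| := by
  classical
  set β := ∑ s', ∑ r', Q (s', tstar, r') with hβdef
  set A := ∑ s, ∑ t, ∑ r,
      |Q (s, t, r) - (∑ s', Q (s', t, r)) * (P (s, t) / ∑ s', P (s', t))| with hAdef
  set B := ∑ s, ∑ t, ∑ r,
      |Q (s, t, r) - (∑ t', Q (s, t', r)) * (P (s, t) / ∑ t', P (s, t'))| with hBdef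
  set D := ∑ s, ∑ t, |(∑ r, Q (s, t, r)) - P (s, t)| with hDdef
  have hA0 : 0 ≤ A := Finset.sum_nonneg fun _ _ => Finset.sum_nonneg fun _ _ =>
    Finset.sum_nonneg fun _ _ => abs_nonneg _
  have hB0 : 0 ≤ B := Finset.sum_nonneg fun _ _ => Finset.sum_nonneg fun _ _ =>
    Finset.sum_nonneg fun _ _ => abs_nonneg _
  have hD0 : 0 ≤ D := Finset.sum_nonneg fun _ _ => Finset.sum_nonneg fun _ _ => abs_nonneg _
  have hPS0 : ∀ s, (0:ℝ) ≤ ∑ t, P (s, t) := fun s => Finset.sum_nonneg fun t _ => hP0 _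
  have hQSR0 : ∀ s r, (0:ℝ) ≤ ∑ t', Q (s, t', r) := fun s r =>
    Finset.sum_nonneg fun t _ => hQ0 _
  have hQST0 : ∀ s t, (0:ℝ) ≤ ∑ r, Q (s, t, r) := fun s t =>
    Finset.sum_nonneg fun r _ => hQ0 _
  have hβ0 : 0 ≤ β := Finset.sum_nonneg fun _ _ => Finset.sum_nonneg fun _ _ => hQ0 _
  have hP1' : ∑ s, ∑ t, P (s, t) = 1 := by rw [← Fintype.sum_prod_type]; exact hP1
  have hα1 : α ≤ 1 := by
    rw [← hPT, ← hP1']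
    exact Finset.sum_le_sum fun s _ =>
      Finset.single_le_sum (fun t _ => hP0 (s, t)) (Finset.mem_univ tstar)
  have hanchor' : ∀ s, P (s, tstar) = α * ∑ t, P (s, t) := fun s => by
    rw [← hanchor s, mul_div_cancel₀ _ hα.ne']
  have hPz : ∀ s, (∑ t, P (s, t)) = 0 → ∀ t, P (s, t) = 0 := fun s hs t =>
    (Finset.sum_eq_zero_iff_of_nonneg (fun t _ => hP0 (s, t))).mp hs t (Finset.mem_univ t)
  -- restriction of A at tstar
  have IA : ∑ s, ∑ r, |Q (s, tstar, r) - (∑ s', Q (s', tstar, r)) * (∑ t, P (s, t))| ≤ A := by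
    rw [hAdef]
    refine Finset.sum_le_sum fun s _ => ?_
    have h := Finset.single_le_sum
      (f := fun t => ∑ r, |Q (s, t, r) - (∑ s', Q (s', t, r)) * (P (s, t) / ∑ s', P (s', t))|)
      (fun t _ => Finset.sum_nonneg fun r _ => abs_nonneg _) (Finset.mem_univ tstar)
    refine le_trans (le_of_eq ?_) h
    refine Finset.sum_congr rfl fun r _ => ?_
    rw [hPT, hanchor s]
  -- restriction of B at tstar
  have IBr : ∑ s, ∑ r,
      |Q (s, tstar, r) - (∑ t', Q (s, t', r)) * (P (s, tstar) / ∑ t', P (s, t'))| ≤ B := by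
    rw [hBdef]
    exact Finset.sum_le_sum fun s _ => Finset.single_le_sum
      (f := fun t => ∑ r, |Q (s, t, r) - (∑ t', Q (s, t', r)) * (P (s, t) / ∑ t', P (s, t'))|)
      (fun t _ => Finset.sum_nonneg fun r _ => abs_nonneg _) (Finset.mem_univ tstar)
  -- per-s bound replacing the conditional by α
  have IBs : ∀ s, ∑ r, |Q (s, tstar, r) - α * ∑ t', Q (s, t', r)|
      ≤ (∑ r, |Q (s, tstar, r) - (∑ t', Q (s, t', r)) * (P (s, tstar) / ∑ t', P (s, t'))|)
        + α * ∑ t, |(∑ r, Q (s, t, r)) - P (s, t)| := by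
    intro s
    by_cases hs : (∑ t, P (s, t)) = 0
    · have hp : ∀ t, P (s, t) = 0 := hPz s hs
      have e1 : ∀ r, |Q (s, tstar, r) - (∑ t', Q (s, t', r)) * (P (s, tstar) / ∑ t', P (s, t'))|
          = |Q (s, tstar, r)| := by
        intro r
        rw [show (∑ t', P (s, t')) = 0 from hs, div_zero, mul_zero, sub_zero]
      have e2 : ∑ t, |(∑ r, Q (s, t, r)) - P (s, t)| = ∑ r, ∑ t, Q (s, t, r) := by
        rw [← Finset.sum_comm]
        exact Finset.sum_congr rfl fun t _ => by
          rw [hp t, sub_zero, abs_of_nonneg (hQST0 s t)]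
      rw [e2, Finset.sum_congr rfl fun r _ => e1 r, Finset.mul_sum, ← Finset.sum_add_distrib]
      refine Finset.sum_le_sum fun r _ => ?_
      refine (abs_sub _ _).trans ?_
      rw [abs_of_nonneg (mul_nonneg hα.le (hQSR0 s r))]
    · have key : P (s, tstar) / ∑ t', P (s, t') = α := by
        rw [hanchor' s, mul_div_assoc, div_self hs, mul_one]
      rw [key]
      have e : ∑ r, |Q (s, tstar, r) - α * ∑ t', Q (s, t', r)|
          = ∑ r, |Q (s, tstar, r) - (∑ t', Q (s, t', r)) * α| :=
        Finset.sum_congr rfl fun r _ => by rw [mul_comm]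
      rw [e]
      exact le_add_of_nonneg_right (mul_nonneg hα.le
        (Finset.sum_nonneg fun t _ => abs_nonneg _))
  have IB : ∑ s, ∑ r, |Q (s, tstar, r) - α * ∑ t', Q (s, t', r)| ≤ B + α * D := by
    calc ∑ s, ∑ r, |Q (s, tstar, r) - α * ∑ t', Q (s, t', r)|
        ≤ ∑ s, ((∑ r, |Q (s, tstar, r) - (∑ t', Q (s, t', r)) * (P (s, tstar) / ∑ t', P (s, t'))|)
            + α * ∑ t, |(∑ r, Q (s, t, r)) - P (s, t)|) :=
          Finset.sum_le_sum fun s _ => IBs s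
      _ = (∑ s, ∑ r, |Q (s, tstar, r) - (∑ t', Q (s, t', r)) * (P (s, tstar) / ∑ t', P (s, t'))|)
            + α * D := by rw [Finset.sum_add_distrib, ← Finset.mul_sum, hDdef]
      _ ≤ B + α * D := add_le_add_left IBr _
  -- |β - α| ≤ D
  have hDr : ∑ s, |(∑ r, Q (s, tstar, r)) - P (s, tstar)| ≤ D := by
    rw [hDdef]
    exact Finset.sum_le_sum fun s _ => Finset.single_le_sum
      (f := fun t => |(∑ r, Q (s, t, r)) - P (s, t)|)
      (fun t _ => abs_nonneg _) (Finset.mem_univ tstar)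
  have hβα : |β - α| ≤ D := by
    have e : β - α = ∑ s, ((∑ r, Q (s, tstar, r)) - P (s, tstar)) := by
      rw [Finset.sum_sub_distrib, hβdef, hPT]
    rw [e]
    exact (Finset.abs_sum_le_sum_abs _ _).trans hDr
  -- facts about N r = (∑ s', Q (s', tstar, r)) / β
  have hQstar : ∀ r, (∑ s', Q (s', tstar, r)) = β * ((∑ s', Q (s', tstar, r)) / β) := by
    intro r
    by_cases hb : β = 0
    · have hc : ∑ r', ∑ s', Q (s', tstar, r') = 0 := by
        rw [Finset.sum_comm, ← hβdef]; exact hb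
      have h0 : (∑ s', Q (s', tstar, r)) = 0 :=
        (Finset.sum_eq_zero_iff_of_nonneg fun r' _ =>
          Finset.sum_nonneg fun s' _ => hQ0 _).mp hc r (Finset.mem_univ r)
      rw [h0, hb]; simp
    · rw [mul_div_cancel₀ _ hb]
  have hNsum : ∑ r, (∑ s', Q (s', tstar, r)) / β ≤ 1 := by
    rw [← Finset.sum_div]
    have hc : ∑ r, ∑ s', Q (s', tstar, r) = β := by rw [Finset.sum_comm, ← hβdef]
    rw [hc]
    by_cases hb : β = 0
    · rw [hb]; norm_num
    · rw [div_self hb]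
  have hN0 : ∀ r, (0:ℝ) ≤ (∑ s', Q (s', tstar, r)) / β := fun r =>
    div_nonneg (Finset.sum_nonneg fun _ _ => hQ0 _) hβ0
  -- combine IA and IB
  have V0 : ∑ s, ∑ r, |α * (∑ t', Q (s, t', r)) - (∑ t, P (s, t)) * (∑ s', Q (s', tstar, r))|
      ≤ (B + α * D) + A := by
    have hpt : ∀ s, ∀ r,
        |α * (∑ t', Q (s, t', r)) - (∑ t, P (s, t)) * (∑ s', Q (s', tstar, r))|
        ≤ |Q (s, tstar, r) - α * ∑ t', Q (s, t', r)|
          + |Q (s, tstar, r) - (∑ s', Q (s', tstar, r)) * (∑ t, P (s, t))| := by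
      intro s r
      have e : α * (∑ t', Q (s, t', r)) - (∑ t, P (s, t)) * (∑ s', Q (s', tstar, r))
          = -(Q (s, tstar, r) - α * ∑ t', Q (s, t', r))
            + (Q (s, tstar, r) - (∑ s', Q (s', tstar, r)) * (∑ t, P (s, t))) := by ring
      rw [e]
      exact (abs_add_le _ _).trans (by rw [abs_neg])
    calc ∑ s, ∑ r, |α * (∑ t', Q (s, t', r)) - (∑ t, P (s, t)) * (∑ s', Q (s', tstar, r))|
        ≤ ∑ s, ∑ r, (|Q (s, tstar, r) - α * ∑ t', Q (s, t', r)|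
            + |Q (s, tstar, r) - (∑ s', Q (s', tstar, r)) * (∑ t, P (s, t))|) :=
          Finset.sum_le_sum fun s _ => Finset.sum_le_sum fun r _ => hpt s r
      _ = (∑ s, ∑ r, |Q (s, tstar, r) - α * ∑ t', Q (s, t', r)|)
            + ∑ s, ∑ r, |Q (s, tstar, r) - (∑ s', Q (s', tstar, r)) * (∑ t, P (s, t))| := by
          simp only [Finset.sum_add_distrib]
      _ ≤ (B + α * D) + A := add_le_add IB IA
  -- main intermediate bound
  have V : ∑ s, ∑ r,
      |(∑ t', Q (s, t', r)) - (∑ t, P (s, t)) * ((∑ s', Q (s', tstar, r)) / β)|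
      ≤ (((B + α * D) + A) + D) / α := by
    rw [le_div_iff₀ hα, Finset.sum_mul]
    have hpt : ∀ s, ∀ r,
        |(∑ t', Q (s, t', r)) - (∑ t, P (s, t)) * ((∑ s', Q (s', tstar, r)) / β)| * α
        ≤ |α * (∑ t', Q (s, t', r)) - (∑ t, P (s, t)) * (∑ s', Q (s', tstar, r))|
          + (∑ t, P (s, t)) * ((∑ s', Q (s', tstar, r)) / β) * |β - α| := by
      intro s r
      have h := aux_pt α β (∑ t', Q (s, t', r)) (∑ t, P (s, t))
        ((∑ s', Q (s', tstar, r)) / β) hα.le (hPS0 s) (hN0 r)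
      rw [← hQstar r] at h
      exact h
    have h2 : ∑ s, ∑ r, (∑ t, P (s, t)) * ((∑ s', Q (s', tstar, r)) / β) * |β - α| ≤ D := by
      have step : ∀ s, ∑ r, (∑ t, P (s, t)) * ((∑ s', Q (s', tstar, r)) / β) * |β - α|
          ≤ (∑ t, P (s, t)) * |β - α| := by
        intro s
        have e : ∑ r, (∑ t, P (s, t)) * ((∑ s', Q (s', tstar, r)) / β) * |β - α|
            = (∑ t, P (s, t)) * (∑ r, (∑ s', Q (s', tstar, r)) / β) * |β - α| := by
          rw [← Finset.sum_mul, ← Finset.mul_sum]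
        rw [e]
        have hm := mul_le_mul_of_nonneg_right
          (mul_le_mul_of_nonneg_left hNsum (hPS0 s)) (abs_nonneg (β - α))
        simpa using hm
      calc ∑ s, ∑ r, (∑ t, P (s, t)) * ((∑ s', Q (s', tstar, r)) / β) * |β - α|
          ≤ ∑ s, (∑ t, P (s, t)) * |β - α| := Finset.sum_le_sum fun s _ => step s
        _ = (∑ s, ∑ t, P (s, t)) * |β - α| := (Finset.sum_mul _ _ _).symm
        _ = |β - α| := by rw [hP1', one_mul]
        _ ≤ D := hβα
    calc ∑ s, (∑ r,
          |(∑ t', Q (s, t', r)) - (∑ t, P (s, t)) * ((∑ s', Q (s', tstar, r)) / β)|) * α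
        = ∑ s, ∑ r,
          |(∑ t', Q (s, t', r)) - (∑ t, P (s, t)) * ((∑ s', Q (s', tstar, r)) / β)| * α := by
          simp only [Finset.sum_mul]
      _ ≤ ∑ s, ∑ r,
          (|α * (∑ t', Q (s, t', r)) - (∑ t, P (s, t)) * (∑ s', Q (s', tstar, r))|
            + (∑ t, P (s, t)) * ((∑ s', Q (s', tstar, r)) / β) * |β - α|) :=
          Finset.sum_le_sum fun s _ => Finset.sum_le_sum fun r _ => hpt s r
      _ = (∑ s, ∑ r, |α * (∑ t', Q (s, t', r)) - (∑ t, P (s, t)) * (∑ s', Q (s', tstar, r))|)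
            + ∑ s, ∑ r, (∑ t, P (s, t)) * ((∑ s', Q (s', tstar, r)) / β) * |β - α| := by
          simp only [Finset.sum_add_distrib]
      _ ≤ ((B + α * D) + A) + D := add_le_add V0 h2
  -- final pointwise decomposition
  have final_pt : ∀ s t r,
      |Q (s, t, r) - P (s, t) * ((∑ s', Q (s', tstar, r)) / β)|
      ≤ |Q (s, t, r) - (∑ t', Q (s, t', r)) * (P (s, t) / ∑ t', P (s, t'))|
        + (P (s, t) / ∑ t, P (s, t)) *
          |(∑ t', Q (s, t', r)) - (∑ t, P (s, t)) * ((∑ s', Q (s', tstar, r)) / β)| := by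
    intro s t r
    by_cases hs : (∑ t, P (s, t)) = 0
    · have hp : P (s, t) = 0 := hPz s hs t
      simp [hp]
    · have hc : (∑ t', Q (s, t', r)) * (P (s, t) / ∑ t', P (s, t'))
          - P (s, t) * ((∑ s', Q (s', tstar, r)) / β)
          = (P (s, t) / ∑ t, P (s, t)) *
            ((∑ t', Q (s, t', r)) - (∑ t, P (s, t)) * ((∑ s', Q (s', tstar, r)) / β)) := by
        field_simp
      calc |Q (s, t, r) - P (s, t) * ((∑ s', Q (s', tstar, r)) / β)|
          = |(Q (s, t, r) - (∑ t', Q (s, t', r)) * (P (s, t) / ∑ t', P (s, t')))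
              + ((∑ t', Q (s, t', r)) * (P (s, t) / ∑ t', P (s, t'))
                - P (s, t) * ((∑ s', Q (s', tstar, r)) / β))| := by rw [sub_add_sub_cancel]
        _ ≤ |Q (s, t, r) - (∑ t', Q (s, t', r)) * (P (s, t) / ∑ t', P (s, t'))|
              + |(∑ t', Q (s, t', r)) * (P (s, t) / ∑ t', P (s, t'))
                - P (s, t) * ((∑ s', Q (s', tstar, r)) / β)| := abs_add_le _ _
        _ = _ := by
            rw [hc, abs_mul, abs_of_nonneg (div_nonneg (hP0 (s, t)) (hPS0 s))]
  -- conditional weights sum to at most one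
  have hw : ∀ s, ∑ t, P (s, t) / ∑ t, P (s, t) ≤ 1 := by
    intro s
    rw [← Finset.sum_div]
    by_cases hs : (∑ t, P (s, t)) = 0
    · rw [hs]; norm_num
    · rw [div_self hs]
  -- assemble
  have main : ∑ s, ∑ t, ∑ r,
      |Q (s, t, r) - P (s, t) * ((∑ s', Q (s', tstar, r)) / β)|
      ≤ B + (((B + α * D) + A) + D) / α := by
    calc ∑ s, ∑ t, ∑ r, |Q (s, t, r) - P (s, t) * ((∑ s', Q (s', tstar, r)) / β)|
        ≤ ∑ s, ∑ t, ∑ r,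
            (|Q (s, t, r) - (∑ t', Q (s, t', r)) * (P (s, t) / ∑ t', P (s, t'))|
              + (P (s, t) / ∑ t, P (s, t)) *
                |(∑ t', Q (s, t', r)) - (∑ t, P (s, t)) * ((∑ s', Q (s', tstar, r)) / β)|) :=
          Finset.sum_le_sum fun s _ => Finset.sum_le_sum fun t _ =>
            Finset.sum_le_sum fun r _ => final_pt s t r
      _ = B + ∑ s, ∑ t, ∑ r, (P (s, t) / ∑ t, P (s, t)) *
            |(∑ t', Q (s, t', r)) - (∑ t, P (s, t)) * ((∑ s', Q (s', tstar, r)) / β)| := by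
          simp only [Finset.sum_add_distrib]; rfl
      _ ≤ B + ∑ s, ∑ r,
            |(∑ t', Q (s, t', r)) - (∑ t, P (s, t)) * ((∑ s', Q (s', tstar, r)) / β)| := by
          refine add_le_add_right (Finset.sum_le_sum fun s _ => ?_) B
          calc ∑ t, ∑ r, (P (s, t) / ∑ t, P (s, t)) *
                |(∑ t', Q (s, t', r)) - (∑ t, P (s, t)) * ((∑ s', Q (s', tstar, r)) / β)|
              = (∑ t, P (s, t) / ∑ t, P (s, t)) * ∑ r,
                |(∑ t', Q (s, t', r)) - (∑ t, P (s, t)) * ((∑ s', Q (s', tstar, r)) / β)| := by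
                rw [Finset.sum_mul]
                exact Finset.sum_congr rfl fun t _ => (Finset.mul_sum _ _ _).symm
            _ ≤ 1 * ∑ r,
                |(∑ t', Q (s, t', r)) - (∑ t, P (s, t)) * ((∑ s', Q (s', tstar, r)) / β)| :=
                mul_le_mul_of_nonneg_right (hw s)
                  (Finset.sum_nonneg fun r _ => abs_nonneg _)
            _ = _ := one_mul _
      _ ≤ B + (((B + α * D) + A) + D) / α := add_le_add_right V B
  refine main.trans ?_
  have h : 2 / α * (A + B) + 5 / α * D - (B + (((B + α * D) + A) + D) / α)
      = (A + (1 - α) * B + (4 - α) * D) / α := by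
    field_simp
    ring
  have h2 : 0 ≤ (A + (1 - α) * B + (4 - α) * D) / α := by
    apply div_nonneg _ hα.le
    nlinarith
  linarith
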